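/- arXiv:1212.4898 — 2 statements merged into one kernel-verified Lean document; each statement's English description precedes it below -/
import Mathlib

section
/- If e ~ N(0, σ²) and Δ = σ·Q⁻¹(α/β) with 0 < α < β, then the optimal expected cost satisfies α·Δ + β·E[(e − Δ)⁺] = σ·β·φ(Q⁻¹(α/β)), where φ is the standard normal density. -/
open Real MeasureTheory Set Filter Topology

/-- Standard normal density. -/
noncomputable def stdPdf (x : ℝ) : ℝ := (Real.sqrt (2 * Real.pi))⁻¹ * Real.exp (-x ^ 2 / 2)

/-- Complementary standard normal CDF. -/
noncomputable def Qfun (a : ℝ) : ℝ := ∫ x in Set.Ioi a, stdPdf x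

/-- Inverse of the complementary standard normal CDF. -/
noncomputable def Qinv : ℝ → ℝ := Function.invFun Qfun

/-- Density of a centered Gaussian with standard deviation `σ`. -/
noncomputable def gaussPdf (σ x : ℝ) : ℝ :=
  (σ * Real.sqrt (2 * Real.pi))⁻¹ * Real.exp (-x ^ 2 / (2 * σ ^ 2))

lemma stdPdf_eq (x : ℝ) : stdPdf x = (Real.sqrt (2 * Real.pi))⁻¹ * Real.exp (-(1/2) * x ^ 2) := by
  unfold stdPdf; ring_nf

lemma integrable_stdPdf : Integrable stdPdf := by
  have := (integrable_exp_neg_mul_sq (by norm_num : (0:ℝ) < 1/2)).const_mul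
    (Real.sqrt (2 * Real.pi))⁻¹
  exact this.congr (by filter_upwards with x; rw [stdPdf_eq])

lemma integrable_mul_stdPdf : Integrable (fun x => x * stdPdf x) := by
  have := ((integrable_mul_exp_neg_mul_sq (by norm_num : (0:ℝ) < 1/2)).const_mul
    (Real.sqrt (2 * Real.pi))⁻¹)
  exact this.congr (by filter_upwards with x; rw [stdPdf_eq]; ring)

lemma integral_stdPdf : ∫ x, stdPdf x = 1 := by
  have h : ∫ x, stdPdf x = (Real.sqrt (2 * Real.pi))⁻¹ * ∫ x, Real.exp (-(1/2) * x ^ 2) := by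
    rw [← integral_const_mul]; congr 1; ext x; rw [stdPdf_eq]
  rw [h, integral_gaussian]
  have : Real.sqrt (π / (1/2)) = Real.sqrt (2 * π) := by norm_num [mul_comm]
  rw [this, inv_mul_cancel₀]
  positivity

lemma Qfun_eq (b : ℝ) : Qfun b = Qfun 0 - ∫ x in (0:ℝ)..b, stdPdf x := by
  have h0 : (∫ x in Iic (0:ℝ), stdPdf x) + Qfun 0 = ∫ x, stdPdf x :=
    intervalIntegral.integral_Iic_add_Ioi integrable_stdPdf.integrableOn integrable_stdPdf.integrableOn
  have hb : (∫ x in Iic b, stdPdf x) + Qfun b = ∫ x, stdPdf x :=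
    intervalIntegral.integral_Iic_add_Ioi integrable_stdPdf.integrableOn integrable_stdPdf.integrableOn
  have hint : (∫ x in Iic b, stdPdf x) - ∫ x in Iic (0:ℝ), stdPdf x = ∫ x in (0:ℝ)..b, stdPdf x :=
    intervalIntegral.integral_Iic_sub_Iic integrable_stdPdf.integrableOn
      integrable_stdPdf.integrableOn
  linarith

lemma continuous_Qfun : Continuous Qfun := by
  have : Continuous fun b => ∫ x in (0:ℝ)..b, stdPdf x :=
    integrable_stdPdf.continuous_primitive 0
  have h : Continuous fun b => Qfun 0 - ∫ x in (0:ℝ)..b, stdPdf x := continuous_const.sub this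
  exact h.congr fun b => (Qfun_eq b).symm

lemma tendsto_Qfun_atTop : Tendsto Qfun atTop (𝓝 0) := by
  have h : Tendsto (fun b => ∫ x in (0:ℝ)..b, stdPdf x) atTop (𝓝 (Qfun 0)) :=
    intervalIntegral_tendsto_integral_Ioi 0 integrable_stdPdf.integrableOn tendsto_id
  have := (tendsto_const_nhds (x := Qfun 0)).sub h
  simp only [sub_self] at this
  exact this.congr fun b => (Qfun_eq b).symm

lemma tendsto_Qfun_atBot : Tendsto Qfun atBot (𝓝 1) := by
  have h : Tendsto (fun b : ℝ => ∫ x in b..(0:ℝ), stdPdf x) atBot (𝓝 (∫ x in Iic (0:ℝ), stdPdf x)) :=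
    intervalIntegral_tendsto_integral_Iic 0 integrable_stdPdf.integrableOn tendsto_id
  have h2 : Tendsto Qfun atBot (𝓝 (Qfun 0 + ∫ x in Iic (0:ℝ), stdPdf x)) := by
    have := (tendsto_const_nhds (x := Qfun 0)).add h
    refine this.congr fun b => ?_
    rw [Qfun_eq b, intervalIntegral.integral_symm]; ring
  have h0 : (∫ x in Iic (0:ℝ), stdPdf x) + Qfun 0 = 1 := by
    rw [← integral_stdPdf]
    exact intervalIntegral.integral_Iic_add_Ioi integrable_stdPdf.integrableOn integrable_stdPdf.integrableOn
  convert h2 using 2; linarith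

lemma Qfun_surj {p : ℝ} (hp0 : 0 < p) (hp1 : p < 1) : ∃ a, Qfun a = p := by
  obtain ⟨v, hv⟩ := (tendsto_Qfun_atTop.eventually (eventually_lt_nhds hp0)).exists
  obtain ⟨u, hu⟩ := (tendsto_Qfun_atBot.eventually (eventually_gt_nhds hp1)).exists
  have h := intermediate_value_uIcc (a := u) (b := v) (f := Qfun) continuous_Qfun.continuousOn
  have hp : p ∈ uIcc (Qfun u) (Qfun v) := by
    rw [mem_uIcc]; right; exact ⟨hv.le, hu.le⟩
  obtain ⟨a, _, ha⟩ := h hp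
  exact ⟨a, ha⟩

lemma Qfun_Qinv {p : ℝ} (hp0 : 0 < p) (hp1 : p < 1) : Qfun (Qinv p) = p :=
  Function.invFun_eq (Qfun_surj hp0 hp1)

lemma stdPdf_hasDeriv (x : ℝ) : HasDerivAt (fun u => -stdPdf u) (x * stdPdf x) x := by
  have h1 : HasDerivAt (fun u : ℝ => -u ^ 2 / 2) (-x) x := by
    have := ((hasDerivAt_pow 2 x).neg).div_const 2
    refine this.congr_deriv ?_; push_cast; ring
  have h2 : HasDerivAt (fun u : ℝ => -((Real.sqrt (2 * Real.pi))⁻¹ * Real.exp (-u ^ 2 / 2)))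
      (x * stdPdf x) x := by
    have h3 := ((h1.exp).const_mul (Real.sqrt (2 * Real.pi))⁻¹).neg
    refine h3.congr_deriv ?_
    simp only [stdPdf]; ring
  exact h2

lemma tendsto_stdPdf_atTop : Tendsto stdPdf atTop (𝓝 0) := by
  have h1 : Tendsto (fun x : ℝ => -x ^ 2 / 2) atTop atBot := by
    apply Tendsto.atBot_div_const (by norm_num : (0:ℝ) < 2)
    exact tendsto_neg_atTop_atBot.comp (tendsto_pow_atTop two_ne_zero)
  have h2 := Real.tendsto_exp_atBot.comp h1
  have h3 := h2.const_mul (Real.sqrt (2 * Real.pi))⁻¹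
  rw [mul_zero] at h3
  exact h3.congr fun x => rfl

lemma integral_Ioi_mul_stdPdf (a : ℝ) : ∫ x in Ioi a, x * stdPdf x = stdPdf a := by
  have ht : Tendsto (fun u => -stdPdf u) atTop (𝓝 0) := by
    simpa using tendsto_stdPdf_atTop.neg
  have h := integral_Ioi_of_hasDerivAt_of_tendsto
    (f := fun u => -stdPdf u) (f' := fun u => u * stdPdf u) (a := a) (m := 0)
    (stdPdf_hasDeriv a).continuousAt.continuousWithinAt
    (fun x _ => stdPdf_hasDeriv x)
    integrable_mul_stdPdf.integrableOn ht
  simpa using h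

lemma key_integral (σ a : ℝ) (hσ : 0 < σ) :
    ∫ x, max (x - σ * a) 0 * gaussPdf σ x = σ * (stdPdf a - a * Qfun a) := by
  set f : ℝ → ℝ := fun x => max (x - σ * a) 0 * gaussPdf σ x with hf
  have hcomp : ∀ u, f (σ * u) = max (u - a) 0 * stdPdf u := by
    intro u
    have h1 : gaussPdf σ (σ * u) = σ⁻¹ * stdPdf u := by
      unfold gaussPdf stdPdf
      rw [mul_inv]
      have : -(σ * u) ^ 2 / (2 * σ ^ 2) = -u ^ 2 / 2 := by
        field_simp
      rw [this]; ring
    have h2 : max (σ * u - σ * a) 0 = σ * max (u - a) 0 := by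
      rw [mul_max_of_nonneg _ _ hσ.le, mul_zero, mul_sub]
    simp only [hf, h1, h2]
    field_simp
  have hchg : ∫ x, f x = σ * ∫ u, max (u - a) 0 * stdPdf u := by
    have := Measure.integral_comp_mul_left f σ
    simp only [hcomp] at this
    rw [smul_eq_mul, abs_of_pos (inv_pos.mpr hσ)] at this
    rw [eq_comm, inv_mul_eq_iff_eq_mul₀ hσ.ne'] at this
    rw [← this]
  rw [hchg]
  congr 1
  have hzero : ∀ u, u ∉ Ioi a → max (u - a) 0 * stdPdf u = 0 := by
    intro u hu
    simp only [mem_Ioi, not_lt] at hu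
    rw [max_eq_right (by linarith), zero_mul]
  rw [← setIntegral_eq_integral_of_forall_compl_eq_zero hzero]
  have hcong : ∫ u in Ioi a, max (u - a) 0 * stdPdf u
      = ∫ u in Ioi a, (u * stdPdf u - a * stdPdf u) := by
    apply setIntegral_congr_fun measurableSet_Ioi
    intro u hu
    simp only [mem_Ioi] at hu
    show max (u - a) 0 * stdPdf u = u * stdPdf u - a * stdPdf u
    rw [max_eq_left (by linarith)]
    ring
  rw [hcong, integral_sub (integrable_mul_stdPdf.integrableOn)
    ((integrable_stdPdf.const_mul a).integrableOn),
    integral_Ioi_mul_stdPdf, integral_const_mul]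
  rfl

/-- with `e ~ N(0, σ²)` and `Δ = σ Q⁻¹(α/β)`, `0 < α < β`,
the optimal expected cost satisfies `α Δ + β E[(e − Δ)⁺] = σ β φ(Q⁻¹(α/β))`. -/
theorem stmt2 (α β σ : ℝ) (hα : 0 < α) (hαβ : α < β) (hσ : 0 < σ) :
    α * (σ * Qinv (α / β)) +
        β * ∫ x, max (x - σ * Qinv (α / β)) 0 * gaussPdf σ x
      = σ * β * stdPdf (Qinv (α / β)) := by
  have hβ : 0 < β := hα.trans hαβ
  have hp0 : 0 < α / β := div_pos hα hβ
  have hp1 : α / β < 1 := (div_lt_one hβ).2 hαβ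
  rw [key_integral σ (Qinv (α / β)) hσ, Qfun_Qinv hp0 hp1]
  field_simp
  ring
end

section
/- Let z₁, z₂ be jointly continuous random variables (e.g., bivariate Gaussian with nondegenerate covariance) and 0 < α₁ ≤ α₂ < min(β₁, β₂). Define F(Δ₁, Δ₂) = α₁Δ₁ + α₂Δ₂ + m·E[(z₁+z₂−Δ₁−Δ₂)⁺·1{z₂<Δ₂}] + m·E[(z₁−Δ₁)⁺·1{z₂>Δ₂}] + β₂·E[(z₂−Δ₂)⁺] with m = min(β₁, β₂). Then F is convex in (Δ₁, Δ₂), and any stationary point satisfies the equilibrium equations α₁ = m·P(z₁ > Δ₁, z₁+z₂ > Δ₁+Δ₂) and α₂ = β₂·P(z₂ > Δ₂) + m·P(z₂ < Δ₂, z₁+z₂ > Δ₁+Δ₂). -/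
open Real MeasureTheory Set Filter

namespace Stmt9Aux

variable {Ω : Type*} [MeasurableSpace Ω]

lemma ae_ne' {P : Measure Ω} {f : Ω → ℝ} {c : ℝ} (h : P {ω | f ω = c} = 0) :
    ∀ᵐ ω ∂P, f ω ≠ c := by
  rw [ae_iff]; simpa using h

lemma abs_min_sub_min_le' (c a b : ℝ) : |min c a - min c b| ≤ |a - b| := by
  rcases le_total c a with h1 | h1 <;> rcases le_total c b with h2 | h2 <;>
    simp only [min_eq_left, min_eq_right, h1, h2] <;> rw [abs_le] <;> constructor <;>
      linarith [le_abs_self (a - b), neg_abs_le (a - b)]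

lemma intMax (P : Measure Ω) [IsProbabilityMeasure P] {f w : Ω → ℝ}
    (hf : Measurable f) (hif : Integrable f P) (hw : Measurable w)
    (hw1 : ∀ ω, |w ω| ≤ 1) : Integrable (fun ω => max (f ω) 0 * w ω) P := by
  refine Integrable.mono' hif.abs
    ((hf.max measurable_const).mul hw).aestronglyMeasurable
    (Filter.Eventually.of_forall fun ω => ?_)
  rw [Real.norm_eq_abs, abs_mul]
  have h1 : |max (f ω) 0| ≤ |f ω| := by
    rcases le_total (f ω) 0 with h | h
    · rw [max_eq_right h]; simp [abs_nonneg]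
    · rw [max_eq_left h]
  nlinarith [abs_nonneg (f ω), abs_nonneg (w ω), hw1 ω, abs_nonneg (max (f ω) 0)]

noncomputable def h2 (m b u v : ℝ) : ℝ :=
  max (max 0 (b * v)) (max (m * (u + v)) (m * u + b * v))

lemma h2_nonneg (m b u v : ℝ) : 0 ≤ h2 m b u v :=
  le_trans (le_max_left 0 (b*v)) (le_max_left _ _)

lemma le_h2_bv (m b u v : ℝ) : b * v ≤ h2 m b u v :=
  le_trans (le_max_right 0 (b*v)) (le_max_left _ _)

lemma le_h2_sum (m b u v : ℝ) : m * (u + v) ≤ h2 m b u v :=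
  le_trans (le_max_left _ _) (le_max_right _ _)

lemma le_h2_mix (m b u v : ℝ) : m * u + b * v ≤ h2 m b u v :=
  le_trans (le_max_right _ _) (le_max_right _ _)

lemma h2_eq {m b : ℝ} (hm : 0 ≤ m) (hmb : m ≤ b) {u v : ℝ} (hv : v ≠ 0) :
    m * (max (u + v) 0 * (if v < 0 then (1:ℝ) else 0))
      + m * (max u 0 * (if 0 < v then (1:ℝ) else 0)) + b * max v 0 = h2 m b u v := by
  unfold h2
  rcases hv.lt_or_gt with h | h
  · rw [if_pos h, if_neg (by linarith), mul_one, mul_zero, mul_zero, add_zero,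
      max_eq_right h.le, mul_zero, add_zero]
    rw [max_eq_left (by nlinarith : b * v ≤ (0:ℝ)),
      max_eq_left (by nlinarith : m * u + b * v ≤ m * (u + v)),
      max_comm (0:ℝ) (m * (u+v)), mul_max_of_nonneg _ _ hm, mul_zero]
  · rw [if_neg (by linarith), if_pos h, mul_zero, mul_zero, zero_add, mul_one,
      max_eq_left h.le]
    rw [max_eq_right (by nlinarith : (0:ℝ) ≤ b * v),
      max_eq_right (by nlinarith : m * (u + v) ≤ m * u + b * v)]
    rcases le_total u 0 with hu | hu
    · rw [max_eq_right hu, mul_zero, zero_add,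
        max_eq_left (by nlinarith : m * u + b * v ≤ b * v)]
    · rw [max_eq_left hu, max_eq_right (by nlinarith : b * v ≤ m * u + b * v)]

lemma h2_cvx {m b : ℝ} (u v u' v' a c : ℝ) (ha : 0 ≤ a) (hc : 0 ≤ c) :
    h2 m b (a * u + c * u') (a * v + c * v')
      ≤ a * h2 m b u v + c * h2 m b u' v' := by
  have H0 : (0:ℝ) ≤ a * h2 m b u v + c * h2 m b u' v' := by
    have := h2_nonneg m b u v; have := h2_nonneg m b u' v'; positivity
  refine max_le (max_le H0 ?_) (max_le ?_ ?_)
  · calc b * (a * v + c * v') = a * (b * v) + c * (b * v') := by ring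
      _ ≤ _ := add_le_add (mul_le_mul_of_nonneg_left (le_h2_bv _ _ _ _) ha)
          (mul_le_mul_of_nonneg_left (le_h2_bv _ _ _ _) hc)
  · calc m * (a * u + c * u' + (a * v + c * v'))
        = a * (m * (u + v)) + c * (m * (u' + v')) := by ring
      _ ≤ _ := add_le_add (mul_le_mul_of_nonneg_left (le_h2_sum _ _ _ _) ha)
          (mul_le_mul_of_nonneg_left (le_h2_sum _ _ _ _) hc)
  · calc m * (a * u + c * u') + b * (a * v + c * v')
        = a * (m * u + b * v) + c * (m * u' + b * v') := by ring
      _ ≤ _ := add_le_add (mul_le_mul_of_nonneg_left (le_h2_mix _ _ _ _) ha)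
          (mul_le_mul_of_nonneg_left (le_h2_mix _ _ _ _) hc)

lemma h2_abs_le (m b u v : ℝ) :
    |h2 m b u v| ≤ |b * v| + |m * (u + v)| + |m * u + b * v| := by
  rw [abs_of_nonneg (h2_nonneg m b u v)]
  unfold h2
  refine max_le (max_le (by positivity) ?_) (max_le ?_ ?_)
  · have := le_abs_self (b * v); have := abs_nonneg (m*(u+v)); have := abs_nonneg (m*u+b*v); linarith
  · have := le_abs_self (m*(u+v)); have := abs_nonneg (b*v); have := abs_nonneg (m*u+b*v); linarith
  · have := le_abs_self (m*u+b*v); have := abs_nonneg (b*v); have := abs_nonneg (m*(u+v)); linarith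

lemma derivA (P : Measure Ω) [IsProbabilityMeasure P]
    (X : Ω → ℝ) (hX : Measurable X) (hiX : Integrable X P)
    (S : Set Ω) (hS : MeasurableSet S) (t₀ : ℝ) (h0 : P {ω | X ω = t₀} = 0) :
    HasDerivAt (fun t => ∫ ω, max (X ω - t) 0 * S.indicator (fun _ => (1:ℝ)) ω ∂P)
      (-(P (S ∩ {ω | t₀ < X ω})).toReal) t₀ := by
  have hind : ∀ ω, |S.indicator (fun _ => (1:ℝ)) ω| ≤ 1 := by
    intro ω; by_cases h : ω ∈ S <;> simp [indicator_apply, h]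
  have hmeas : ∀ t : ℝ, AEStronglyMeasurable
      (fun ω => max (X ω - t) 0 * S.indicator (fun _ => (1:ℝ)) ω) P := by
    intro t
    exact (((hX.sub measurable_const).max measurable_const).mul
      ((measurable_const (a := (1:ℝ))).indicator hS)).aestronglyMeasurable
  have hSX : MeasurableSet (S ∩ {ω | t₀ < X ω}) :=
    hS.inter (measurableSet_lt measurable_const hX)
  have key := hasDerivAt_integral_of_dominated_loc_of_lip
    (F := fun t ω => max (X ω - t) 0 * S.indicator (fun _ => (1:ℝ)) ω)
    (F' := fun ω => -((S ∩ {ω | t₀ < X ω}).indicator (fun _ => (1:ℝ)) ω))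
    (bound := fun _ => 1) (μ := P) (x₀ := t₀) (s := Metric.ball t₀ 1) (Metric.ball_mem_nhds t₀ one_pos)
    (Filter.Eventually.of_forall hmeas)
    (by
      refine (Integrable.mono' (g := fun ω => |X ω| + |t₀|)
        (hiX.abs.add (integrable_const _)) (hmeas t₀) (Filter.Eventually.of_forall ?_))
      intro ω
      rw [Real.norm_eq_abs, abs_mul]
      calc |max (X ω - t₀) 0| * |S.indicator (fun _ => (1:ℝ)) ω|
          ≤ |max (X ω - t₀) 0| * 1 :=
            mul_le_mul_of_nonneg_left (hind ω) (abs_nonneg _)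
        _ ≤ |X ω| + |t₀| := by
            rw [mul_one, abs_le]
            refine ⟨by nlinarith [le_max_right (X ω - t₀) 0, abs_nonneg (X ω), abs_nonneg t₀], ?_⟩
            rcases le_total (X ω - t₀) 0 with h | h
            · rw [max_eq_right h]; positivity
            · rw [max_eq_left h]
              have h1 := le_abs_self (X ω); have h2 := neg_abs_le t₀; linarith)
    (((measurable_const (a := (1:ℝ))).indicator hSX).neg.aestronglyMeasurable)
    (Filter.Eventually.of_forall (fun ω => by
      have hl : LipschitzWith 1 (fun t : ℝ => max (X ω - t) 0 * S.indicator (fun _ => (1:ℝ)) ω) := by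
        refine LipschitzWith.of_dist_le_mul fun x y => ?_
        simp only [Real.dist_eq, NNReal.coe_one, one_mul]
        rw [← sub_mul, abs_mul]
        calc |max (X ω - x) 0 - max (X ω - y) 0| * |S.indicator (fun _ => (1:ℝ)) ω|
            ≤ |X ω - x - (X ω - y)| * 1 :=
              mul_le_mul (abs_max_sub_max_le_abs _ _ _) (hind ω) (abs_nonneg _) (abs_nonneg _)
          _ = |x - y| := by rw [mul_one, show X ω - x - (X ω - y) = -(x - y) by ring, abs_neg]
      have h1 : Real.nnabs ((1:ℝ)) = 1 := by simp
      rw [h1]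
      exact LipschitzWith.lipschitzOnWith hl))
    (integrable_const _)
    (by
      filter_upwards [ae_ne' h0] with ω hω
      rcases hω.lt_or_gt with h | h
      · have hz : -(S ∩ {ω' | t₀ < X ω'}).indicator (fun _ => (1:ℝ)) ω = 0 := by
          rw [Set.indicator_of_notMem (fun hc => absurd hc.2 h.not_gt), neg_zero]
        show HasDerivAt _ (-(S ∩ {ω' | t₀ < X ω'}).indicator (fun _ => (1:ℝ)) ω) t₀
        rw [hz]
        have hev : ∀ᶠ t in nhds t₀, max (X ω - t) 0 * S.indicator (fun _ => (1:ℝ)) ω = 0 := by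
          filter_upwards [eventually_gt_nhds h] with t ht
          rw [max_eq_right (by linarith), zero_mul]
        exact (hasDerivAt_const t₀ (0:ℝ)).congr_of_eventuallyEq
          (by filter_upwards [hev] with t ht; rw [ht])
      · have hev : ∀ᶠ t in nhds t₀, max (X ω - t) 0 * S.indicator (fun _ => (1:ℝ)) ω
            = (X ω - t) * S.indicator (fun _ => (1:ℝ)) ω := by
          filter_upwards [eventually_lt_nhds h] with t ht
          rw [max_eq_left (by linarith)]
        have hder : HasDerivAt (fun t => (X ω - t) * S.indicator (fun _ => (1:ℝ)) ω)
            ((-1) * S.indicator (fun _ => (1:ℝ)) ω) t₀ :=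
          ((hasDerivAt_id t₀).const_sub (X ω)).mul_const _
        have hz : (-1 : ℝ) * S.indicator (fun _ => (1:ℝ)) ω
            = -(S ∩ {ω' | t₀ < X ω'}).indicator (fun _ => (1:ℝ)) ω := by
          by_cases hωS : ω ∈ S
          · rw [Set.indicator_of_mem hωS, Set.indicator_of_mem (Set.mem_inter hωS h)]; ring
          · rw [Set.indicator_of_notMem hωS, Set.indicator_of_notMem (fun hc => hωS hc.1)]; ring
        show HasDerivAt _ (-(S ∩ {ω' | t₀ < X ω'}).indicator (fun _ => (1:ℝ)) ω) t₀
        rw [← hz]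
        exact hder.congr_of_eventuallyEq hev)
  have key2 := key.2
  simp only [integral_neg] at key2
  rw [integral_indicator_const (1:ℝ) hSX, smul_eq_mul, mul_one] at key2
  exact key2

lemma derivB (P : Measure Ω) [IsProbabilityMeasure P]
    (X Y : Ω → ℝ) (hX : Measurable X) (hY : Measurable Y) (hiY : Integrable Y P)
    (t₀ : ℝ) (h0 : P {ω | X ω = t₀} = 0) (h1 : P {ω | X ω - Y ω = t₀} = 0) :
    HasDerivAt (fun t => ∫ ω, max (min (Y ω) (X ω - t)) 0 ∂P)
      (-(P {ω | X ω - Y ω < t₀ ∧ t₀ < X ω}).toReal) t₀ := by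
  have hTm : MeasurableSet {ω | X ω - Y ω < t₀ ∧ t₀ < X ω} := by
    have : {ω | X ω - Y ω < t₀ ∧ t₀ < X ω}
        = {ω | X ω - Y ω < t₀} ∩ {ω | t₀ < X ω} := rfl
    rw [this]
    exact (measurableSet_lt (hX.sub hY) measurable_const).inter
      (measurableSet_lt measurable_const hX)
  have hmeas : ∀ t : ℝ, AEStronglyMeasurable
      (fun ω => max (min (Y ω) (X ω - t)) 0) P := fun t =>
    ((hY.min (hX.sub measurable_const)).max measurable_const).aestronglyMeasurable
  have key := hasDerivAt_integral_of_dominated_loc_of_lip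
    (F := fun t ω => max (min (Y ω) (X ω - t)) 0)
    (F' := fun ω => -({ω | X ω - Y ω < t₀ ∧ t₀ < X ω}.indicator (fun _ => (1:ℝ)) ω))
    (bound := fun _ => 1) (μ := P) (x₀ := t₀) (s := Metric.ball t₀ 1) (Metric.ball_mem_nhds t₀ one_pos)
    (Filter.Eventually.of_forall hmeas)
    (by
      refine Integrable.mono' (g := fun ω => |Y ω|) hiY.abs (hmeas t₀)
        (Filter.Eventually.of_forall fun ω => ?_)
      rw [Real.norm_eq_abs, abs_of_nonneg (le_max_right _ _)]
      exact max_le ((min_le_left _ _).trans (le_abs_self _)) (abs_nonneg _))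
    (((measurable_const (a := (1:ℝ))).indicator hTm).neg.aestronglyMeasurable)
    (Filter.Eventually.of_forall (fun ω => by
      have hl : LipschitzWith 1 (fun t : ℝ => max (min (Y ω) (X ω - t)) 0) := by
        refine LipschitzWith.of_dist_le_mul fun x y => ?_
        simp only [Real.dist_eq, NNReal.coe_one, one_mul]
        calc |max (min (Y ω) (X ω - x)) 0 - max (min (Y ω) (X ω - y)) 0|
            ≤ |min (Y ω) (X ω - x) - min (Y ω) (X ω - y)| := abs_max_sub_max_le_abs _ _ _
          _ ≤ |(X ω - x) - (X ω - y)| := abs_min_sub_min_le' _ _ _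
          _ = |x - y| := by rw [show X ω - x - (X ω - y) = -(x - y) by ring, abs_neg]
      have hone : Real.nnabs ((1:ℝ)) = 1 := by simp
      rw [hone]
      exact LipschitzWith.lipschitzOnWith hl))
    (integrable_const _)
    (by
      filter_upwards [ae_ne' h0, ae_ne' h1] with ω hω hωY
      by_cases hq : X ω - Y ω < t₀
      · rcases hω.lt_or_gt with h | h
        · have hz : -({ω' | X ω' - Y ω' < t₀ ∧ t₀ < X ω'}).indicator (fun _ => (1:ℝ)) ω = 0 := by
            rw [Set.indicator_of_notMem (fun hc => absurd hc.2 h.not_gt), neg_zero]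
          show HasDerivAt _ (-({ω' | X ω' - Y ω' < t₀ ∧ t₀ < X ω'}).indicator (fun _ => (1:ℝ)) ω) t₀
          rw [hz]
          have hev : ∀ᶠ t in nhds t₀, max (min (Y ω) (X ω - t)) 0 = 0 := by
            filter_upwards [eventually_gt_nhds h] with t ht
            rw [max_eq_right (min_le_of_right_le (by linarith))]
          exact (hasDerivAt_const t₀ (0:ℝ)).congr_of_eventuallyEq
            (by filter_upwards [hev] with t ht; rw [ht])
        · have hz : -({ω' | X ω' - Y ω' < t₀ ∧ t₀ < X ω'}).indicator (fun _ => (1:ℝ)) ω = -1 := by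
            rw [Set.indicator_of_mem (show ω ∈ {ω' | X ω' - Y ω' < t₀ ∧ t₀ < X ω'} from ⟨hq, h⟩)]
          show HasDerivAt _ (-({ω' | X ω' - Y ω' < t₀ ∧ t₀ < X ω'}).indicator (fun _ => (1:ℝ)) ω) t₀
          rw [hz]
          have hev : ∀ᶠ t in nhds t₀, max (min (Y ω) (X ω - t)) 0 = X ω - t := by
            filter_upwards [eventually_gt_nhds hq, eventually_lt_nhds h] with t ht1 ht2
            rw [min_eq_right (by linarith), max_eq_left (by linarith)]
          exact ((hasDerivAt_id t₀).const_sub (X ω)).congr_of_eventuallyEq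
            (by filter_upwards [hev] with t ht; rw [ht]; rfl)
      · have hq' : t₀ < X ω - Y ω := lt_of_le_of_ne (not_lt.1 hq) (Ne.symm hωY)
        have hz : -({ω' | X ω' - Y ω' < t₀ ∧ t₀ < X ω'}).indicator (fun _ => (1:ℝ)) ω = 0 := by
          rw [Set.indicator_of_notMem (fun hc => absurd hc.1 hq), neg_zero]
        show HasDerivAt _ (-({ω' | X ω' - Y ω' < t₀ ∧ t₀ < X ω'}).indicator (fun _ => (1:ℝ)) ω) t₀
        rw [hz]
        have hev : ∀ᶠ t in nhds t₀, max (min (Y ω) (X ω - t)) 0 = max (Y ω) 0 := by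
          filter_upwards [eventually_lt_nhds hq'] with t ht
          rw [min_eq_left (by linarith)]
        exact (hasDerivAt_const t₀ (max (Y ω) 0)).congr_of_eventuallyEq
          (by filter_upwards [hev] with t ht; rw [ht]))
  have key2 := key.2
  simp only [integral_neg] at key2
  rw [integral_indicator_const (1:ℝ) hTm, smul_eq_mul, mul_one] at key2
  exact key2

end Stmt9Aux

open Stmt9Aux
/-- the two-bus first-stage objective `F` (with backflow recourse)
is convex, and any stationary point satisfies the equilibrium equations
`α₁ = m P(z₁ > Δ₁, z₁+z₂ > Δ₁+Δ₂)` and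
`α₂ = β₂ P(z₂ > Δ₂) + m P(z₂ < Δ₂, z₁+z₂ > Δ₁+Δ₂)`, `m = min(β₁,β₂)`. -/
theorem stmt9 {Ω : Type*} [MeasurableSpace Ω] (P : Measure Ω) [IsProbabilityMeasure P]
    (z₁ z₂ : Ω → ℝ) (hm1 : Measurable z₁) (hm2 : Measurable z₂)
    (hi1 : Integrable z₁ P) (hi2 : Integrable z₂ P)
    (hcont1 : ∀ c : ℝ, P {ω | z₁ ω = c} = 0)
    (hcont2 : ∀ c : ℝ, P {ω | z₂ ω = c} = 0)
    (hcont12 : ∀ c : ℝ, P {ω | z₁ ω + z₂ ω = c} = 0)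
    (α₁ α₂ β₁ β₂ : ℝ) (hα₁ : 0 < α₁) (hα₁₂ : α₁ ≤ α₂) (hα₂ : α₂ < min β₁ β₂)
    (F : ℝ → ℝ → ℝ)
    (hF : ∀ Δ₁ Δ₂, F Δ₁ Δ₂ = α₁ * Δ₁ + α₂ * Δ₂
      + min β₁ β₂ *
          ∫ ω, max (z₁ ω + z₂ ω - Δ₁ - Δ₂) 0 * (if z₂ ω < Δ₂ then 1 else 0) ∂P
      + min β₁ β₂ * ∫ ω, max (z₁ ω - Δ₁) 0 * (if Δ₂ < z₂ ω then 1 else 0) ∂P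
      + β₂ * ∫ ω, max (z₂ ω - Δ₂) 0 ∂P) :
    ConvexOn ℝ Set.univ (fun p : ℝ × ℝ => F p.1 p.2) ∧
    ∀ Δ₁ Δ₂ : ℝ,
      HasDerivAt (fun t => F t Δ₂) 0 Δ₁ → HasDerivAt (fun t => F Δ₁ t) 0 Δ₂ →
      (α₁ = min β₁ β₂ *
          (P {ω | Δ₁ < z₁ ω ∧ Δ₁ + Δ₂ < z₁ ω + z₂ ω}).toReal ∧
       α₂ = β₂ * (P {ω | Δ₂ < z₂ ω}).toReal
          + min β₁ β₂ *
              (P {ω | z₂ ω < Δ₂ ∧ Δ₁ + Δ₂ < z₁ ω + z₂ ω}).toReal) := by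
  set m : ℝ := min β₁ β₂ with hmdef
  have hm0 : 0 < m := (hα₁.trans_le hα₁₂).trans hα₂
  have hmb : m ≤ β₂ := min_le_right β₁ β₂
  -- integrability of the three basic integrands
  have int1 : ∀ (Δ₁ Δ₂ : ℝ), Integrable
      (fun ω => max (z₁ ω + z₂ ω - Δ₁ - Δ₂) 0 * (if z₂ ω < Δ₂ then (1:ℝ) else 0)) P :=
    fun Δ₁ Δ₂ => intMax P (((hm1.add hm2).sub measurable_const).sub measurable_const)
      (((hi1.add hi2).sub (integrable_const _)).sub (integrable_const _))
      (Measurable.ite (measurableSet_lt hm2 measurable_const) measurable_const measurable_const)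
      (fun ω => by split_ifs <;> simp)
  have int2 : ∀ (Δ₁ Δ₂ : ℝ), Integrable
      (fun ω => max (z₁ ω - Δ₁) 0 * (if Δ₂ < z₂ ω then (1:ℝ) else 0)) P :=
    fun Δ₁ Δ₂ => intMax P (hm1.sub measurable_const) (hi1.sub (integrable_const _))
      (Measurable.ite (measurableSet_lt measurable_const hm2) measurable_const measurable_const)
      (fun ω => by split_ifs <;> simp)
  have int3 : ∀ Δ₂ : ℝ, Integrable (fun ω => max (z₂ ω - Δ₂) 0) P := fun Δ₂ => by
    have := intMax P (f := fun ω => z₂ ω - Δ₂) (w := fun _ => (1:ℝ))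
      (hm2.sub measurable_const) (hi2.sub (integrable_const Δ₂))
      measurable_const (fun ω => by simp)
    simpa using this
  -- integrability of the h2 integrand
  have hinth2 : ∀ Δ₁ Δ₂ : ℝ, Integrable (fun ω => h2 m β₂ (z₁ ω - Δ₁) (z₂ ω - Δ₂)) P := by
    intro Δ₁ Δ₂
    have hmeas : Measurable (fun ω => h2 m β₂ (z₁ ω - Δ₁) (z₂ ω - Δ₂)) := by
      unfold h2
      exact (measurable_const.max ((hm2.sub measurable_const).const_mul β₂)).max
        ((((hm1.sub measurable_const).add (hm2.sub measurable_const)).const_mul m).max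
          (((hm1.sub measurable_const).const_mul m).add
            ((hm2.sub measurable_const).const_mul β₂)))
    refine Integrable.mono'
      (g := fun ω => |β₂ * (z₂ ω - Δ₂)| + |m * (z₁ ω - Δ₁ + (z₂ ω - Δ₂))|
        + |m * (z₁ ω - Δ₁) + β₂ * (z₂ ω - Δ₂)|) ?_ hmeas.aestronglyMeasurable
      (Filter.Eventually.of_forall fun ω => by
        rw [Real.norm_eq_abs]; exact h2_abs_le m β₂ _ _)
    exact (((hi2.sub (integrable_const _)).const_mul β₂).abs.add
      (((hi1.sub (integrable_const _)).add (hi2.sub (integrable_const _))).const_mul m).abs).add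
      ((((hi1.sub (integrable_const _)).const_mul m).add
        ((hi2.sub (integrable_const _)).const_mul β₂)).abs)
  -- representation of F via the jointly convex integrand h2
  have Frep : ∀ Δ₁ Δ₂ : ℝ, F Δ₁ Δ₂
      = α₁ * Δ₁ + α₂ * Δ₂ + ∫ ω, h2 m β₂ (z₁ ω - Δ₁) (z₂ ω - Δ₂) ∂P := by
    intro Δ₁ Δ₂
    rw [hF Δ₁ Δ₂]
    have e1 : ∫ ω, h2 m β₂ (z₁ ω - Δ₁) (z₂ ω - Δ₂) ∂P
        = ∫ ω, (m * (max (z₁ ω + z₂ ω - Δ₁ - Δ₂) 0 * (if z₂ ω < Δ₂ then (1:ℝ) else 0))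
            + m * (max (z₁ ω - Δ₁) 0 * (if Δ₂ < z₂ ω then (1:ℝ) else 0))
            + β₂ * max (z₂ ω - Δ₂) 0) ∂P := by
      refine integral_congr_ae ?_
      filter_upwards [ae_ne' (hcont2 Δ₂)] with ω hω
      have hv : z₂ ω - Δ₂ ≠ 0 := sub_ne_zero.2 hω
      rw [← h2_eq hm0.le hmb hv]
      simp only [sub_neg, sub_pos,
        show z₁ ω - Δ₁ + (z₂ ω - Δ₂) = z₁ ω + z₂ ω - Δ₁ - Δ₂ from by ring]
    have i1 : Integrable (fun ω => m * (max (z₁ ω + z₂ ω - Δ₁ - Δ₂) 0 * (if z₂ ω < Δ₂ then (1:ℝ) else 0))) P :=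
      (int1 Δ₁ Δ₂).const_mul m
    have i2 : Integrable (fun ω => m * (max (z₁ ω - Δ₁) 0 * (if Δ₂ < z₂ ω then (1:ℝ) else 0))) P :=
      (int2 Δ₁ Δ₂).const_mul m
    have i12 : Integrable (fun ω => m * (max (z₁ ω + z₂ ω - Δ₁ - Δ₂) 0 * (if z₂ ω < Δ₂ then (1:ℝ) else 0))
        + m * (max (z₁ ω - Δ₁) 0 * (if Δ₂ < z₂ ω then (1:ℝ) else 0))) P := i1.add i2
    have i3 : Integrable (fun ω => β₂ * max (z₂ ω - Δ₂) 0) P := (int3 Δ₂).const_mul β₂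
    rw [e1, integral_add i12 i3, integral_add i1 i2,
      integral_const_mul, integral_const_mul, integral_const_mul]
    ring
  constructor
  · -- convexity
    refine ⟨convex_univ, ?_⟩
    rintro ⟨p1, p2⟩ - ⟨q1, q2⟩ - a c ha hc hac
    simp only [Prod.smul_mk, Prod.mk_add_mk, smul_eq_mul]
    rw [Frep, Frep, Frep]
    have hI : ∫ ω, h2 m β₂ (z₁ ω - (a * p1 + c * q1)) (z₂ ω - (a * p2 + c * q2)) ∂P
        ≤ a * ∫ ω, h2 m β₂ (z₁ ω - p1) (z₂ ω - p2) ∂P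
          + c * ∫ ω, h2 m β₂ (z₁ ω - q1) (z₂ ω - q2) ∂P := by
      have step1 : ∫ ω, h2 m β₂ (z₁ ω - (a * p1 + c * q1)) (z₂ ω - (a * p2 + c * q2)) ∂P
          ≤ ∫ ω, (a * h2 m β₂ (z₁ ω - p1) (z₂ ω - p2)
              + c * h2 m β₂ (z₁ ω - q1) (z₂ ω - q2)) ∂P := by
        refine integral_mono (hinth2 _ _)
          (((hinth2 p1 p2).const_mul a).add ((hinth2 q1 q2).const_mul c)) fun ω => ?_
        have e1 : z₁ ω - (a * p1 + c * q1) = a * (z₁ ω - p1) + c * (z₁ ω - q1) := by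
          linear_combination (-(z₁ ω)) * hac
        have e2 : z₂ ω - (a * p2 + c * q2) = a * (z₂ ω - p2) + c * (z₂ ω - q2) := by
          linear_combination (-(z₂ ω)) * hac
        rw [e1, e2]
        exact h2_cvx _ _ _ _ a c ha hc
      have ia : Integrable (fun ω => a * h2 m β₂ (z₁ ω - p1) (z₂ ω - p2)) P :=
        (hinth2 p1 p2).const_mul a
      have ic : Integrable (fun ω => c * h2 m β₂ (z₁ ω - q1) (z₂ ω - q2)) P :=
        (hinth2 q1 q2).const_mul c
      rw [integral_add ia ic, integral_const_mul, integral_const_mul] at step1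
      exact step1
    have elin : α₁ * (a * p1 + c * q1) + α₂ * (a * p2 + c * q2)
        = a * (α₁ * p1 + α₂ * p2) + c * (α₁ * q1 + α₂ * q2) := by ring
    have expand : a * (α₁ * p1 + α₂ * p2 + ∫ ω, h2 m β₂ (z₁ ω - p1) (z₂ ω - p2) ∂P)
        + c * (α₁ * q1 + α₂ * q2 + ∫ ω, h2 m β₂ (z₁ ω - q1) (z₂ ω - q2) ∂P)
        = (a * (α₁ * p1 + α₂ * p2) + c * (α₁ * q1 + α₂ * q2))
          + (a * ∫ ω, h2 m β₂ (z₁ ω - p1) (z₂ ω - p2) ∂P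
            + c * ∫ ω, h2 m β₂ (z₁ ω - q1) (z₂ ω - q2) ∂P) := by ring
    linarith [hI, elin, expand]
  · -- stationarity
    intro Δ₁ Δ₂ hD1 hD2
    refine ⟨?_, ?_⟩
    · -- first equilibrium equation
      have hX₁m : Measurable (fun ω => z₁ ω + z₂ ω - Δ₂) := (hm1.add hm2).sub measurable_const
      have hX₁i : Integrable (fun ω => z₁ ω + z₂ ω - Δ₂) P := (hi1.add hi2).sub (integrable_const _)
      have hS₁ : MeasurableSet {ω | z₂ ω < Δ₂} := measurableSet_lt hm2 measurable_const
      have hS₂ : MeasurableSet {ω | Δ₂ < z₂ ω} := measurableSet_lt measurable_const hm2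
      have h01 : P {ω | (fun ω => z₁ ω + z₂ ω - Δ₂) ω = Δ₁} = 0 := by
        have he : {ω | (fun ω => z₁ ω + z₂ ω - Δ₂) ω = Δ₁} = {ω | z₁ ω + z₂ ω = Δ₁ + Δ₂} := by
          ext ω; simp only [Set.mem_setOf_eq]; constructor <;> intro h <;> linarith
        rw [he]; exact hcont12 _
      have hA1 := derivA P (fun ω => z₁ ω + z₂ ω - Δ₂) hX₁m hX₁i {ω | z₂ ω < Δ₂} hS₁ Δ₁ h01
      have hA2 := derivA P z₁ hm1 hi1 {ω | Δ₂ < z₂ ω} hS₂ Δ₁ (hcont1 Δ₁)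
      have hFeq1 : (fun t => F t Δ₂) = fun t =>
          α₁ * t + α₂ * Δ₂
          + m * ∫ ω, max ((fun ω => z₁ ω + z₂ ω - Δ₂) ω - t) 0
              * ({ω | z₂ ω < Δ₂}).indicator (fun _ => (1:ℝ)) ω ∂P
          + m * ∫ ω, max (z₁ ω - t) 0
              * ({ω | Δ₂ < z₂ ω}).indicator (fun _ => (1:ℝ)) ω ∂P
          + β₂ * ∫ ω, max (z₂ ω - Δ₂) 0 ∂P := by
        funext t
        rw [hF t Δ₂]
        have ea : ∫ ω, max (z₁ ω + z₂ ω - t - Δ₂) 0 * (if z₂ ω < Δ₂ then (1:ℝ) else 0) ∂P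
            = ∫ ω, max ((fun ω => z₁ ω + z₂ ω - Δ₂) ω - t) 0
                * ({ω | z₂ ω < Δ₂}).indicator (fun _ => (1:ℝ)) ω ∂P :=
          integral_congr_ae (Filter.Eventually.of_forall fun ω => by
            simp only [Set.indicator_apply, Set.mem_setOf_eq]
            rw [show z₁ ω + z₂ ω - t - Δ₂ = z₁ ω + z₂ ω - Δ₂ - t from by ring])
        have eb : ∫ ω, max (z₁ ω - t) 0 * (if Δ₂ < z₂ ω then (1:ℝ) else 0) ∂P
            = ∫ ω, max (z₁ ω - t) 0 * ({ω | Δ₂ < z₂ ω}).indicator (fun _ => (1:ℝ)) ω ∂P :=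
          integral_congr_ae (Filter.Eventually.of_forall fun ω => by
            simp only [Set.indicator_apply, Set.mem_setOf_eq])
        rw [ea, eb]
      rw [hFeq1] at hD1
      have hbuilt : HasDerivAt (fun t =>
          α₁ * t + α₂ * Δ₂
          + m * ∫ ω, max ((fun ω => z₁ ω + z₂ ω - Δ₂) ω - t) 0
              * ({ω | z₂ ω < Δ₂}).indicator (fun _ => (1:ℝ)) ω ∂P
          + m * ∫ ω, max (z₁ ω - t) 0
              * ({ω | Δ₂ < z₂ ω}).indicator (fun _ => (1:ℝ)) ω ∂P
          + β₂ * ∫ ω, max (z₂ ω - Δ₂) 0 ∂P)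
          (α₁ + 0
            + m * (-(P ({ω | z₂ ω < Δ₂} ∩ {ω | Δ₁ < (fun ω => z₁ ω + z₂ ω - Δ₂) ω})).toReal)
            + m * (-(P ({ω | Δ₂ < z₂ ω} ∩ {ω | Δ₁ < z₁ ω})).toReal)
            + 0) Δ₁ := by
        have hlin : HasDerivAt (fun t : ℝ => α₁ * t) α₁ Δ₁ := by
          simpa using (hasDerivAt_id Δ₁).const_mul α₁
        exact (((hlin.add (hasDerivAt_const _ _)).add (hA1.const_mul m)).add
          (hA2.const_mul m)).add (hasDerivAt_const _ _)
      have hzero := hD1.unique hbuilt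
      have hdisj : Disjoint ({ω | z₂ ω < Δ₂} ∩ {ω | Δ₁ < (fun ω => z₁ ω + z₂ ω - Δ₂) ω})
          ({ω | Δ₂ < z₂ ω} ∩ {ω | Δ₁ < z₁ ω}) :=
        Set.disjoint_left.mpr (fun {ω} h1 h2 =>
          lt_asymm (show z₂ ω < Δ₂ from h1.1) (show Δ₂ < z₂ ω from h2.1))
      have hsub : ({ω | z₂ ω < Δ₂} ∩ {ω | Δ₁ < (fun ω => z₁ ω + z₂ ω - Δ₂) ω})
          ∪ ({ω | Δ₂ < z₂ ω} ∩ {ω | Δ₁ < z₁ ω})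
          ⊆ {ω | Δ₁ < z₁ ω ∧ Δ₁ + Δ₂ < z₁ ω + z₂ ω} := by
        rintro ω (⟨h1, h2⟩ | ⟨h1, h2⟩) <;> simp only [Set.mem_setOf_eq] at * <;>
          exact ⟨by linarith, by linarith⟩
      have hsub2 : {ω | Δ₁ < z₁ ω ∧ Δ₁ + Δ₂ < z₁ ω + z₂ ω}
          \ (({ω | z₂ ω < Δ₂} ∩ {ω | Δ₁ < (fun ω => z₁ ω + z₂ ω - Δ₂) ω})
            ∪ ({ω | Δ₂ < z₂ ω} ∩ {ω | Δ₁ < z₁ ω})) ⊆ {ω | z₂ ω = Δ₂} := by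
        rintro ω ⟨hB, hn⟩
        simp only [Set.mem_setOf_eq]
        by_contra hne
        rcases Ne.lt_or_gt hne with h | h
        · exact hn (Or.inl ⟨h, by simp only [Set.mem_setOf_eq] at hB ⊢; linarith [hB.2]⟩)
        · exact hn (Or.inr ⟨h, hB.1⟩)
      have haeq : P (({ω | z₂ ω < Δ₂} ∩ {ω | Δ₁ < (fun ω => z₁ ω + z₂ ω - Δ₂) ω})
          ∪ ({ω | Δ₂ < z₂ ω} ∩ {ω | Δ₁ < z₁ ω}))
          = P {ω | Δ₁ < z₁ ω ∧ Δ₁ + Δ₂ < z₁ ω + z₂ ω} :=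
        measure_congr (ae_eq_set.2
          ⟨by rw [Set.diff_eq_empty.2 hsub]; exact measure_empty,
            measure_mono_null hsub2 (hcont2 Δ₂)⟩)
      have hmA2 : MeasurableSet ({ω | Δ₂ < z₂ ω} ∩ {ω | Δ₁ < z₁ ω}) :=
        hS₂.inter (measurableSet_lt measurable_const hm1)
      have hPB : (P {ω | Δ₁ < z₁ ω ∧ Δ₁ + Δ₂ < z₁ ω + z₂ ω}).toReal
          = (P ({ω | z₂ ω < Δ₂} ∩ {ω | Δ₁ < (fun ω => z₁ ω + z₂ ω - Δ₂) ω})).toReal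
            + (P ({ω | Δ₂ < z₂ ω} ∩ {ω | Δ₁ < z₁ ω})).toReal := by
        rw [← ENNReal.toReal_add (measure_ne_top P _) (measure_ne_top P _),
          ← measure_union hdisj hmA2, haeq]
      linear_combination (-1 : ℝ) * hzero - m * hPB
    · -- second equilibrium equation
      have h02 : P {ω | (fun ω => z₁ ω + z₂ ω - Δ₁) ω = Δ₂} = 0 := by
        have he : {ω | (fun ω => z₁ ω + z₂ ω - Δ₁) ω = Δ₂} = {ω | z₁ ω + z₂ ω = Δ₂ + Δ₁} := by
          ext ω; simp only [Set.mem_setOf_eq]; constructor <;> intro h <;> linarith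
        rw [he]; exact hcont12 _
      have h12 : P {ω | (fun ω => z₁ ω + z₂ ω - Δ₁) ω - (fun ω => z₁ ω - Δ₁) ω = Δ₂} = 0 := by
        have he : {ω | (fun ω => z₁ ω + z₂ ω - Δ₁) ω - (fun ω => z₁ ω - Δ₁) ω = Δ₂}
            = {ω | z₂ ω = Δ₂} := by
          ext ω; simp only [Set.mem_setOf_eq]; constructor <;> intro h <;> linarith
        rw [he]; exact hcont2 Δ₂
      have hB2 := derivB P (fun ω => z₁ ω + z₂ ω - Δ₁) (fun ω => z₁ ω - Δ₁)
        ((hm1.add hm2).sub measurable_const) (hm1.sub measurable_const)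
        (hi1.sub (integrable_const _)) Δ₂ h02 h12
      have hsetT : {ω | (fun ω => z₁ ω + z₂ ω - Δ₁) ω - (fun ω => z₁ ω - Δ₁) ω < Δ₂
          ∧ Δ₂ < (fun ω => z₁ ω + z₂ ω - Δ₁) ω}
          = {ω | z₂ ω < Δ₂ ∧ Δ₁ + Δ₂ < z₁ ω + z₂ ω} := by
        ext ω; simp only [Set.mem_setOf_eq]
        constructor <;> rintro ⟨h1, h2⟩ <;> exact ⟨by linarith, by linarith⟩
      rw [hsetT] at hB2
      have hJ := derivA P z₂ hm2 hi2 Set.univ MeasurableSet.univ Δ₂ (hcont2 Δ₂)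
      rw [Set.univ_inter] at hJ
      have hFeq2 : (fun t => F Δ₁ t) = fun t =>
          α₁ * Δ₁ + α₂ * t
          + m * ∫ ω, max (min ((fun ω => z₁ ω - Δ₁) ω)
              ((fun ω => z₁ ω + z₂ ω - Δ₁) ω - t)) 0 ∂P
          + β₂ * ∫ ω, max (z₂ ω - t) 0 * Set.univ.indicator (fun _ => (1:ℝ)) ω ∂P := by
        funext t
        rw [hF Δ₁ t]
        have eΦ : (∫ ω, max (z₁ ω + z₂ ω - Δ₁ - t) 0 * (if z₂ ω < t then (1:ℝ) else 0) ∂P)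
            + (∫ ω, max (z₁ ω - Δ₁) 0 * (if t < z₂ ω then (1:ℝ) else 0) ∂P)
            = ∫ ω, max (min ((fun ω => z₁ ω - Δ₁) ω)
                ((fun ω => z₁ ω + z₂ ω - Δ₁) ω - t)) 0 ∂P := by
          rw [← integral_add (int1 Δ₁ t) (int2 Δ₁ t)]
          refine integral_congr_ae ?_
          filter_upwards [ae_ne' (hcont2 t)] with ω hω
          rcases hω.lt_or_gt with h | h
          · rw [if_pos h, if_neg (by linarith), mul_one, mul_zero, add_zero,
              min_eq_right (by show z₁ ω + z₂ ω - Δ₁ - t ≤ z₁ ω - Δ₁; linarith)]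
          · rw [if_neg (by linarith), if_pos h, mul_zero, mul_one, zero_add,
              min_eq_left (by show z₁ ω - Δ₁ ≤ z₁ ω + z₂ ω - Δ₁ - t; linarith)]
        have eJ : (∫ ω, max (z₂ ω - t) 0 ∂P)
            = ∫ ω, max (z₂ ω - t) 0 * Set.univ.indicator (fun _ => (1:ℝ)) ω ∂P :=
          integral_congr_ae (Filter.Eventually.of_forall fun ω => by simp)
        rw [eJ]
        linear_combination (m : ℝ) * eΦ
      rw [hFeq2] at hD2
      have hbuilt2 : HasDerivAt (fun t =>
          α₁ * Δ₁ + α₂ * t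
          + m * ∫ ω, max (min ((fun ω => z₁ ω - Δ₁) ω)
              ((fun ω => z₁ ω + z₂ ω - Δ₁) ω - t)) 0 ∂P
          + β₂ * ∫ ω, max (z₂ ω - t) 0 * Set.univ.indicator (fun _ => (1:ℝ)) ω ∂P)
          (0 + α₂ + m * (-(P {ω | z₂ ω < Δ₂ ∧ Δ₁ + Δ₂ < z₁ ω + z₂ ω}).toReal)
            + β₂ * (-(P {ω | Δ₂ < z₂ ω}).toReal)) Δ₂ := by
        have hlin : HasDerivAt (fun t : ℝ => α₂ * t) α₂ Δ₂ := by
          simpa using (hasDerivAt_id Δ₂).const_mul α₂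
        exact (((hasDerivAt_const _ _).add hlin).add (hB2.const_mul m)).add (hJ.const_mul β₂)
      have hzero2 := hD2.unique hbuilt2
      linear_combination (-1 : ℝ) * hzero2
end
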